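/- For F = {1,2}, the exceptional Hermite polynomials H_n^F satisfy for all n ≥ 0 the nine-term recurrence 2n(n-1)(n-2)(n-3) H_{n-4}^F(x) + 4n(n-1)(n-2) H_{n-2}^F(x) + n(3n-7) H_n^F(x) + [(n-1)(n-2)/(n+1)] H_{n+2}^F(x) + [(n-1)(n-2)/(8(n+2)(n+3))] H_{n+4}^F(x) = (2x^4 + 2x^2 - 1/2) H_n^F(x). -/

import Mathlib

open Polynomial

/-- The (physicists') Hermite polynomial `H_n`. -/
noncomputable def hermiteP (n : ℕ) : Polynomial ℝ :=
  (n.factorial : ℝ) •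
    ∑ j ∈ Finset.range (n / 2 + 1),
      ((-1 : ℝ) ^ j / ((j.factorial : ℝ) * ((n - 2 * j).factorial : ℝ))) •
        (C (2 : ℝ) * X) ^ (n - 2 * j)

/-- Hermite polynomial with integer index; zero for negative index. -/
noncomputable def hermiteZ (m : ℤ) : Polynomial ℝ :=
  if m < 0 then 0 else hermiteP m.toNat

/-- The exceptional Hermite polynomial `H_n^F` for `F = {1,2}` (so `u_F = 0`), evaluated
at `x`: a `3×3` Wronskian determinant. -/
noncomputable def excH12 (m : ℤ) (x : ℝ) : ℝ :=
  Matrix.det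
    !![(hermiteZ m).eval x, (derivative (hermiteZ m)).eval x,
         (derivative (derivative (hermiteZ m))).eval x;
       (hermiteP 1).eval x, (derivative (hermiteP 1)).eval x,
         (derivative (derivative (hermiteP 1))).eval x;
       (hermiteP 2).eval x, (derivative (hermiteP 2)).eval x,
         (derivative (derivative (hermiteP 2))).eval x]

lemma derivative_hermiteP (n : ℕ) :
    derivative (hermiteP (n + 1)) = C (2 * ((n:ℝ) + 1)) * hermiteP n := by
  have key : ∀ j ∈ Finset.range (n / 2 + 1),
      derivative (((-1 : ℝ) ^ j / ((j.factorial : ℝ) * ((n + 1 - 2 * j).factorial : ℝ))) •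
        (C (2 : ℝ) * X) ^ (n + 1 - 2 * j))
      = (2 * ((n:ℝ) + 1) * (n.factorial : ℝ) / ((n+1).factorial : ℝ)) •
        (((-1 : ℝ) ^ j / ((j.factorial : ℝ) * ((n - 2 * j).factorial : ℝ))) •
        (C (2 : ℝ) * X) ^ (n - 2 * j)) := by
    intro j hj
    simp only [Finset.mem_range] at hj
    have h2j : 2 * j ≤ n := by omega
    have hk : n + 1 - 2 * j = (n - 2 * j) + 1 := by omega
    rw [hk, derivative_smul, derivative_pow]
    set k := n - 2 * j with hkdef
    have hd : derivative (C (2:ℝ) * X) = C (2:ℝ) := by simp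
    rw [hd, Nat.add_sub_cancel, smul_smul, smul_eq_C_mul, smul_eq_C_mul]
    push_cast
    rw [show (C ((-1:ℝ) ^ j / (↑j.factorial * ↑(k+1).factorial)) *
        (C ((k:ℝ) + 1) * (C (2:ℝ) * X) ^ k * C 2)) =
        (C ((-1:ℝ) ^ j / (↑j.factorial * ↑(k+1).factorial)) * C ((k:ℝ) + 1) * C 2) *
          (C (2:ℝ) * X) ^ k by push_cast; ring]
    rw [← C_mul, ← C_mul]
    congr 1
    have h1 : ((k:ℝ) + 1) ≠ 0 := by positivity
    have h2 : (k.factorial : ℝ) ≠ 0 := by exact_mod_cast k.factorial_ne_zero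
    have h3 : (j.factorial : ℝ) ≠ 0 := by exact_mod_cast j.factorial_ne_zero
    have h4 : ((n+1).factorial : ℝ) ≠ 0 := by exact_mod_cast (n+1).factorial_ne_zero
    have h5 : ((n+1).factorial : ℝ) = ((n:ℝ)+1) * n.factorial := by
      rw [Nat.factorial_succ]; push_cast; ring
    have h6 : ((k+1).factorial : ℝ) = ((k:ℝ)+1) * k.factorial := by
      rw [Nat.factorial_succ]; push_cast; ring
    rw [h5, h6]
    field_simp
  have hfin : ∑ j ∈ Finset.range (n / 2 + 1),
      derivative (((-1 : ℝ) ^ j / ((j.factorial : ℝ) * ((n + 1 - 2 * j).factorial : ℝ))) •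
        (C (2 : ℝ) * X) ^ (n + 1 - 2 * j))
      = (2 * ((n:ℝ) + 1) * (n.factorial : ℝ) / ((n+1).factorial : ℝ)) •
        ∑ j ∈ Finset.range (n / 2 + 1),
        (((-1 : ℝ) ^ j / ((j.factorial : ℝ) * ((n - 2 * j).factorial : ℝ))) •
        (C (2 : ℝ) * X) ^ (n - 2 * j)) := by
    rw [Finset.smul_sum]
    exact Finset.sum_congr rfl key
  unfold hermiteP
  rw [derivative_smul, derivative_sum]
  have hrange : ∑ j ∈ Finset.range ((n+1) / 2 + 1),
      derivative (((-1 : ℝ) ^ j / ((j.factorial : ℝ) * ((n + 1 - 2 * j).factorial : ℝ))) •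
        (C (2 : ℝ) * X) ^ (n + 1 - 2 * j))
      = ∑ j ∈ Finset.range (n / 2 + 1),
      derivative (((-1 : ℝ) ^ j / ((j.factorial : ℝ) * ((n + 1 - 2 * j).factorial : ℝ))) •
        (C (2 : ℝ) * X) ^ (n + 1 - 2 * j)) := by
    rcases Nat.even_or_odd n with ⟨t, ht⟩ | ⟨t, ht⟩
    · have : (n+1)/2 + 1 = n/2 + 1 := by omega
      rw [this]
    · have h1 : (n+1)/2 + 1 = (n/2 + 1) + 1 := by omega
      rw [h1, Finset.sum_range_succ]
      have h0 : n + 1 - 2 * (n/2 + 1) = 0 := by omega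
      rw [h0]
      simp
  rw [hrange, hfin, smul_smul]
  rw [smul_eq_C_mul, smul_eq_C_mul, ← mul_assoc, ← C_mul]
  congr 1
  have h4 : ((n+1).factorial : ℝ) ≠ 0 := by exact_mod_cast (n+1).factorial_ne_zero
  have h5 : ((n+1).factorial : ℝ) = ((n:ℝ)+1) * n.factorial := by
    rw [Nat.factorial_succ]; push_cast; ring
  rw [h5]
  field_simp

lemma hermiteP_eval_zero_odd (u : ℕ) : (hermiteP (2*u+1)).eval 0 = 0 := by
  unfold hermiteP
  rw [eval_smul, eval_finset_sum]
  rw [Finset.sum_eq_zero, smul_zero]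
  intro j hj
  simp only [Finset.mem_range] at hj
  have h1 : 2*u+1 - 2*j ≠ 0 := by omega
  rw [eval_smul, eval_pow, eval_mul, eval_C, eval_X, mul_zero, zero_pow h1]
  simp

lemma hermiteP_eval_zero_even (u : ℕ) :
    (hermiteP (2*u)).eval 0 = ((2*u).factorial : ℝ) * ((-1:ℝ)^u / u.factorial) := by
  unfold hermiteP
  rw [eval_smul, eval_finset_sum]
  have hu : (2*u)/2 = u := by omega
  rw [hu]
  rw [Finset.sum_eq_single u]
  · have h0 : 2*u - 2*u = 0 := by omega
    rw [h0]
    simp [smul_eq_mul, Nat.factorial]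
  · intro j hj hne
    simp only [Finset.mem_range] at hj
    have h1 : 2*u - 2*j ≠ 0 := by omega
    rw [eval_smul, eval_pow, eval_mul, eval_C, eval_X, mul_zero, zero_pow h1]
    simp
  · intro h
    exact absurd (Finset.self_mem_range_succ u) h

lemma hermiteP_eval_zero_key (s : ℕ) :
    (hermiteP (s+2)).eval 0 + 2*((s:ℝ)+1) * (hermiteP s).eval 0 = 0 := by
  rcases Nat.even_or_odd s with ⟨u, hu⟩ | ⟨u, hu⟩
  · subst hu
    have h1 : u + u + 2 = 2*(u+1) := by ring
    have h2 : u + u = 2*u := by ring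
    rw [h1, h2, hermiteP_eval_zero_even, hermiteP_eval_zero_even]
    have h3 : (u.factorial : ℝ) ≠ 0 := by exact_mod_cast u.factorial_ne_zero
    have h4 : ((u+1).factorial : ℝ) = ((u:ℝ)+1) * u.factorial := by
      rw [Nat.factorial_succ]; push_cast; ring
    have h5 : ((2*(u+1)).factorial : ℝ) = ((2*u:ℝ)+2) * ((2*u:ℝ)+1) * (2*u).factorial := by
      have : 2*(u+1) = (2*u+1)+1 := by ring
      rw [this, Nat.factorial_succ, Nat.factorial_succ]; push_cast; ring
    rw [h4, h5]
    have h6 : ((u:ℝ)+1) ≠ 0 := by positivity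
    field_simp
    push_cast
    ring
  · subst hu
    have h1 : 2*u+1+2 = 2*(u+1)+1 := by ring
    rw [h1, hermiteP_eval_zero_odd, hermiteP_eval_zero_odd]
    ring

lemma hermiteP_zero : hermiteP 0 = C 1 := by
  unfold hermiteP
  simp [Nat.factorial]

lemma hermiteP_one : hermiteP 1 = C 2 * X := by
  unfold hermiteP
  simp [Nat.factorial, Finset.sum_range_succ]

lemma hermiteP_rec (n : ℕ) :
    hermiteP (n+1) = C 2 * X * hermiteP n - derivative (hermiteP n) := by
  induction n with
  | zero =>
    rw [hermiteP_zero, hermiteP_one]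
    simp
  | succ s ih =>
    have e1 : derivative (hermiteP (s+2)) = C (2 * ((↑(s+1):ℝ) + 1)) * hermiteP (s+1) := by
      rw [show s+2 = s+1+1 from rfl]; exact derivative_hermiteP (s+1)
    have e2 : derivative (hermiteP (s+1)) = C (2 * ((s:ℝ) + 1)) * hermiteP s :=
      derivative_hermiteP s
    have e3 : derivative (derivative (hermiteP (s+1))) =
        C (2 * ((s:ℝ) + 1)) * derivative (hermiteP s) := by
      rw [e2, derivative_C_mul]
    have hc : C (2 * ((↑(s+1):ℝ) + 1)) - C 2 - C (2 * ((s:ℝ) + 1)) = (0 : Polynomial ℝ) := by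
      rw [← C_sub, ← C_sub]
      have : 2 * ((↑(s+1):ℝ) + 1) - 2 - 2 * ((s:ℝ) + 1) = 0 := by push_cast; ring
      rw [this, C_0]
    have key : derivative (hermiteP (s+2) - (C 2 * X * hermiteP (s+1) - derivative (hermiteP (s+1)))) = 0 := by
      have hd : derivative (C (2:ℝ) * X) = C 2 := by simp
      rw [derivative_sub, derivative_sub, derivative_mul, e1, e3, e2, hd]
      rw [ih]
      linear_combination (C 2 * X * hermiteP s - derivative (hermiteP s)) * hc
    have hC := eq_C_of_derivative_eq_zero key
    have hev : (hermiteP (s+2) - (C 2 * X * hermiteP (s+1) - derivative (hermiteP (s+1)))).eval 0 = 0 := by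
      rw [derivative_hermiteP s]
      simp only [eval_sub, eval_mul, eval_C, eval_X, mul_zero, zero_mul, sub_zero]
      have := hermiteP_eval_zero_key s
      linarith [this]
    rw [coeff_zero_eq_eval_zero, hev, map_zero] at hC
    linear_combination hC

/-- eval form of the three-term recurrence, with flexible indices. -/
lemma hermiteP_rec_eval (x : ℝ) (k j1 j2 : ℕ) (h1 : j1 = k+1) (h2 : j2 = k+2) :
    (hermiteP j2).eval x
      = 2*x*(hermiteP j1).eval x - (2*(k:ℝ)+2)*(hermiteP k).eval x := by
  subst h1 h2
  have h := hermiteP_rec (k+1)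
  rw [derivative_hermiteP k] at h
  have := congrArg (eval x) h
  simp only [eval_sub, eval_mul, eval_C, eval_X] at this
  rw [show k+1+1 = k+2 from rfl] at this
  rw [this]; ring

lemma hermiteZ_natCast (k : ℕ) : hermiteZ (k : ℤ) = hermiteP k := by
  unfold hermiteZ
  rw [if_neg (by exact_mod_cast Int.not_lt.mpr (Int.natCast_nonneg k))]
  simp

lemma hermiteP_two : hermiteP 2 = C 4 * X^2 - C 2 := by
  have h := hermiteP_rec 1
  rw [hermiteP_one] at h
  norm_num at h
  rw [h]
  have h4 : C (4:ℝ) = C 2 * C 2 := by rw [← C_mul]; norm_num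
  rw [h4]
  ring

lemma excH12_nat (k : ℕ) (x : ℝ) :
    excH12 (k : ℤ) x = 16*(hermiteP k).eval x - 16*x*(derivative (hermiteP k)).eval x
      + (8*x^2+4)*(derivative (derivative (hermiteP k))).eval x := by
  unfold excH12
  rw [hermiteZ_natCast, hermiteP_one, hermiteP_two]
  simp [Matrix.det_fin_three]
  ring

lemma excH12_eval (l : ℕ) (x : ℝ) :
    excH12 ((l:ℤ)+2) x = 16*(hermiteP (l+2)).eval x
      - (32*(l:ℝ)+64)*x*(hermiteP (l+1)).eval x
      + (8*x^2+4)*(4*((l:ℝ)+2)*((l:ℝ)+1))*(hermiteP l).eval x := by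
  have hcast : ((l:ℤ)+2) = ((l+2 : ℕ) : ℤ) := by push_cast; ring
  rw [hcast, excH12_nat]
  have e1 : derivative (hermiteP (l+2)) = C (2 * ((↑(l+1):ℝ) + 1)) * hermiteP (l+1) := by
    rw [show l+2 = l+1+1 from rfl]; exact derivative_hermiteP (l+1)
  have e2 : derivative (derivative (hermiteP (l+2))) =
      C (2 * ((↑(l+1):ℝ) + 1)) * (C (2 * ((l:ℝ) + 1)) * hermiteP l) := by
    rw [e1, derivative_C_mul, derivative_hermiteP l]
  rw [e2, e1]
  simp only [eval_mul, eval_C]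
  push_cast
  ring

lemma excH12_eval' (l l1 l2 : ℕ) (h1 : l1 = l+1) (h2 : l2 = l+2) (x : ℝ) :
    excH12 ((l:ℤ)+2) x = 16*(hermiteP l2).eval x
      - (32*(l:ℝ)+64)*x*(hermiteP l1).eval x
      + (8*x^2+4)*(4*((l:ℝ)+2)*((l:ℝ)+1))*(hermiteP l).eval x := by
  subst h1 h2; exact excH12_eval l x

lemma excH12_neg (m : ℤ) (hm : m < 0) (x : ℝ) : excH12 m x = 0 := by
  unfold excH12
  rw [Matrix.det_fin_three]
  unfold hermiteZ
  rw [if_pos hm]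
  simp

theorem excHermite_nine_term_recurrence (n : ℕ) (x : ℝ) :
    2 * (n : ℝ) * ((n : ℝ) - 1) * ((n : ℝ) - 2) * ((n : ℝ) - 3) * excH12 ((n : ℤ) - 4) x
      + 4 * (n : ℝ) * ((n : ℝ) - 1) * ((n : ℝ) - 2) * excH12 ((n : ℤ) - 2) x
      + (n : ℝ) * (3 * (n : ℝ) - 7) * excH12 (n : ℤ) x
      + ((n : ℝ) - 1) * ((n : ℝ) - 2) / ((n : ℝ) + 1) * excH12 ((n : ℤ) + 2) x
      + ((n : ℝ) - 1) * ((n : ℝ) - 2) / (8 * ((n : ℝ) + 2) * ((n : ℝ) + 3))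
          * excH12 ((n : ℤ) + 4) x
    = (2 * x ^ 4 + 2 * x ^ 2 - 1 / 2) * excH12 (n : ℤ) x := by
  rcases Nat.lt_or_ge n 6 with hn | hn
  · -- small cases
    have he0 : (hermiteP 0).eval x = 1 := by rw [hermiteP_zero]; simp
    have he1 : (hermiteP 1).eval x = 2*x := by rw [hermiteP_one]; simp
    have he2 : (hermiteP 2).eval x = 4*x^2 - 2 := by
      rw [hermiteP_rec_eval x 0 1 2 rfl rfl, he1, he0]; push_cast; ring
    have he3 : (hermiteP 3).eval x = 8*x^3 - 12*x := by
      rw [hermiteP_rec_eval x 1 2 3 rfl rfl, he2, he1]; push_cast; ring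
    have he4 : (hermiteP 4).eval x = 16*x^4 - 48*x^2 + 12 := by
      rw [hermiteP_rec_eval x 2 3 4 rfl rfl, he3, he2]; push_cast; ring
    have he5 : (hermiteP 5).eval x = 32*x^5 - 160*x^3 + 120*x := by
      rw [hermiteP_rec_eval x 3 4 5 rfl rfl, he4, he3]; push_cast; ring
    have he6 : (hermiteP 6).eval x = 64*x^6 - 480*x^4 + 720*x^2 - 120 := by
      rw [hermiteP_rec_eval x 4 5 6 rfl rfl, he5, he4]; push_cast; ring
    have he7 : (hermiteP 7).eval x = 128*x^7 - 1344*x^5 + 3360*x^3 - 1680*x := by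
      rw [hermiteP_rec_eval x 5 6 7 rfl rfl, he6, he5]; push_cast; ring
    have he8 : (hermiteP 8).eval x = 256*x^8 - 3584*x^6 + 13440*x^4 - 13440*x^2 + 1680 := by
      rw [hermiteP_rec_eval x 6 7 8 rfl rfl, he7, he6]; push_cast; ring
    have he9 : (hermiteP 9).eval x = 512*x^9 - 9216*x^7 + 48384*x^5 - 80640*x^3 + 30240*x := by
      rw [hermiteP_rec_eval x 7 8 9 rfl rfl, he8, he7]; push_cast; ring
    have hd0 : derivative (hermiteP 0) = 0 := by rw [hermiteP_zero]; simp
    have hd1 : derivative (hermiteP 1) = C 2 := by rw [hermiteP_one]; simp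
    have E0 : excH12 (0:ℤ) x = 16 := by
      rw [show (0:ℤ) = ((0:ℕ):ℤ) from by norm_num, excH12_nat, hd0, he0]; simp
    have E1 : excH12 (1:ℤ) x = 0 := by
      rw [show (1:ℤ) = ((1:ℕ):ℤ) from by norm_num, excH12_nat, hd1, he1]; simp; ring
    have E2 : excH12 (2:ℤ) x = 0 := by
      rw [show (2:ℤ) = ((0:ℕ):ℤ)+2 from by norm_num, excH12_eval' 0 1 2 rfl rfl,
        he2, he1, he0]; push_cast; ring
    have E3 : excH12 (3:ℤ) x = 128*x^3 + 192*x := by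
      rw [show (3:ℤ) = ((1:ℕ):ℤ)+2 from by norm_num, excH12_eval' 1 2 3 rfl rfl,
        he3, he2, he1]; push_cast; ring
    have E4 : excH12 (4:ℤ) x = 768*x^4 + 768*x^2 - 192 := by
      rw [show (4:ℤ) = ((2:ℕ):ℤ)+2 from by norm_num, excH12_eval' 2 3 4 rfl rfl,
        he4, he3, he2]; push_cast; ring
    have E5 : excH12 (5:ℤ) x = 3072*x^5 - 3840*x := by
      rw [show (5:ℤ) = ((3:ℕ):ℤ)+2 from by norm_num, excH12_eval' 3 4 5 rfl rfl,
        he5, he4, he3]; push_cast; ring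
    have E6 : excH12 (6:ℤ) x = 10240*x^6 - 15360*x^4 - 23040*x^2 + 3840 := by
      rw [show (6:ℤ) = ((4:ℕ):ℤ)+2 from by norm_num, excH12_eval' 4 5 6 rfl rfl,
        he6, he5, he4]; push_cast; ring
    have E7 : excH12 (7:ℤ) x = 30720*x^7 - 107520*x^5 - 53760*x^3 + 80640*x := by
      rw [show (7:ℤ) = ((5:ℕ):ℤ)+2 from by norm_num, excH12_eval' 5 6 7 rfl rfl,
        he7, he6, he5]; push_cast; ring
    have E8 : excH12 (8:ℤ) x = 86016*x^8 - 516096*x^6 + 215040*x^4 + 645120*x^2 - 80640 := by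
      rw [show (8:ℤ) = ((6:ℕ):ℤ)+2 from by norm_num, excH12_eval' 6 7 8 rfl rfl,
        he8, he7, he6]; push_cast; ring
    have E9 : excH12 (9:ℤ) x = 229376*x^9 - 2064384*x^7 + 3096576*x^5 + 2580480*x^3 - 1935360*x := by
      rw [show (9:ℤ) = ((7:ℕ):ℤ)+2 from by norm_num, excH12_eval' 7 8 9 rfl rfl,
        he9, he8, he7]; push_cast; ring
    have N1 : excH12 (-1:ℤ) x = 0 := excH12_neg _ (by norm_num) x
    have N2 : excH12 (-2:ℤ) x = 0 := excH12_neg _ (by norm_num) x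
    have N3 : excH12 (-3:ℤ) x = 0 := excH12_neg _ (by norm_num) x
    have N4 : excH12 (-4:ℤ) x = 0 := excH12_neg _ (by norm_num) x
    interval_cases n
    all_goals norm_num [N1, N2, N3, N4, E0, E1, E2, E3, E4, E5, E6, E7, E8, E9]
    all_goals ring
  · obtain ⟨m, rfl⟩ : ∃ m, n = m + 6 := ⟨n - 6, by omega⟩
    have g1 := excH12_eval' m (m+1) (m+2) rfl rfl x
    rw [show ((m:ℕ):ℤ)+2 = ((m+6:ℕ):ℤ)-4 from by push_cast; ring] at g1
    have g2 := excH12_eval' (m+2) (m+3) (m+4) (by omega) (by omega) x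
    rw [show ((m+2:ℕ):ℤ)+2 = ((m+6:ℕ):ℤ)-2 from by push_cast; ring] at g2
    have g3 := excH12_eval' (m+4) (m+5) (m+6) (by omega) (by omega) x
    rw [show ((m+4:ℕ):ℤ)+2 = ((m+6:ℕ):ℤ) from by push_cast; ring] at g3
    have g4 := excH12_eval' (m+6) (m+7) (m+8) (by omega) (by omega) x
    have g5 := excH12_eval' (m+8) (m+9) (m+10) (by omega) (by omega) x
    rw [show ((m+8:ℕ):ℤ)+2 = ((m+6:ℕ):ℤ)+4 from by push_cast; ring] at g5
    rw [g1, g2, g3, g4, g5]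
    have r2 := hermiteP_rec_eval x m (m+1) (m+2) rfl rfl
    have r3 := hermiteP_rec_eval x (m+1) (m+2) (m+3) (by omega) (by omega)
    have r4 := hermiteP_rec_eval x (m+2) (m+3) (m+4) (by omega) (by omega)
    have r5 := hermiteP_rec_eval x (m+3) (m+4) (m+5) (by omega) (by omega)
    have r6 := hermiteP_rec_eval x (m+4) (m+5) (m+6) (by omega) (by omega)
    have r7 := hermiteP_rec_eval x (m+5) (m+6) (m+7) (by omega) (by omega)
    have r8 := hermiteP_rec_eval x (m+6) (m+7) (m+8) (by omega) (by omega)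
    have r9 := hermiteP_rec_eval x (m+7) (m+8) (m+9) (by omega) (by omega)
    have r10 := hermiteP_rec_eval x (m+8) (m+9) (m+10) (by omega) (by omega)
    rw [r10, r9, r8, r7, r6, r5, r4, r3, r2]
    have hA : ((m:ℝ)+6+1) ≠ 0 := by positivity
    have hB : (8*((m:ℝ)+6+2)*((m:ℝ)+6+3)) ≠ 0 := by positivity
    push_cast
    field_simp
    ring
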